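/- Let ψ(x) = 1/(1 + e^{−x}) be the sigmoid function. Then: (i) ψ′(x) = ψ(x)(1 − ψ(x)) and ψ″(x) = ψ(x)(1 − ψ(x))(1 − 2ψ(x)) ≤ 1 for all x ∈ ℝ (so ψ is 1-smooth); (ii) for every ū > 0 and every x ∈ [−ū, ū], ψ′(x)² ≥ ψ(ū)(1 − ψ(ū))²·ψ(x). In particular, since inf_{x∈ℝ} ψ(x) = 0, the sigmoid satisfies the PL condition on [−ū, ū] with constant ψ(ū)(1 − ψ(ū))²/2. -/

import Mathlib

/-- The sigmoid function `ψ(x) = 1/(1 + e^{-x})`. -/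
noncomputable def sigmoid : ℝ → ℝ := fun x => 1 / (1 + Real.exp (-x))

lemma sig_pos (x : ℝ) : 0 < sigmoid x := by
  unfold sigmoid
  positivity

lemma sig_lt_one (x : ℝ) : sigmoid x < 1 := by
  unfold sigmoid
  rw [div_lt_one (by positivity)]
  linarith [Real.exp_pos (-x)]

lemma denom_ne (x : ℝ) : (1 : ℝ) + Real.exp (-x) ≠ 0 := by positivity

lemma sig_hasDeriv (x : ℝ) : HasDerivAt sigmoid (sigmoid x * (1 - sigmoid x)) x := by
  have h1 : HasDerivAt (fun x : ℝ => 1 + Real.exp (-x)) (-Real.exp (-x)) x := by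
    have := (Real.hasDerivAt_exp (-x)).comp x (hasDerivAt_neg x)
    simpa using (this.const_add 1)
  have h2 := h1.fun_inv (denom_ne x)
  have : sigmoid = fun x : ℝ => (1 + Real.exp (-x))⁻¹ := by
    funext y; simp [sigmoid, one_div]
  rw [this]
  convert! h2 using 1
  have e := Real.exp_pos (-x)
  field_simp [sigmoid]
  ring

lemma sig_deriv (x : ℝ) : deriv sigmoid x = sigmoid x * (1 - sigmoid x) :=
  (sig_hasDeriv x).deriv

lemma sig_deriv2 (x : ℝ) :
    deriv (deriv sigmoid) x = sigmoid x * (1 - sigmoid x) * (1 - 2 * sigmoid x) := by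
  have heq : deriv sigmoid = fun y => sigmoid y * (1 - sigmoid y) := funext sig_deriv
  rw [heq]
  have h := ((sig_hasDeriv x).fun_mul ((sig_hasDeriv x).const_sub 1)).deriv
  rw [h]
  ring

lemma sig_neg (u : ℝ) : sigmoid (-u) = 1 - sigmoid u := by
  have e := Real.exp_pos (-u)
  have e2 := Real.exp_pos u
  have := Real.exp_neg u
  unfold sigmoid
  field_simp
  rw [Real.exp_neg u]
  field_simp
  ring

lemma sig_mono : Monotone sigmoid := by
  intro x y h
  unfold sigmoid
  apply div_le_div_of_nonneg_left one_pos.le (by positivity)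
  have : Real.exp (-y) ≤ Real.exp (-x) := Real.exp_le_exp.mpr (by linarith)
  linarith

lemma sig_inf : (⨅ x : ℝ, sigmoid x) = 0 := by
  have hbdd : BddBelow (Set.range sigmoid) :=
    ⟨0, by rintro _ ⟨x, rfl⟩; exact (sig_pos x).le⟩
  apply le_antisymm
  · by_contra h
    push_neg at h
    set c := ⨅ x : ℝ, sigmoid x with hc
    have hc0 : 0 < c := h
    -- pick x with sigmoid x < c
    have hx : ∃ x, sigmoid x < c := by
      refine ⟨-Real.log (2 / c), ?_⟩
      have : sigmoid (-Real.log (2 / c)) = 1 / (1 + 2 / c) := by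
        unfold sigmoid
        rw [neg_neg, Real.exp_log (by positivity)]
      rw [this]
      rw [div_lt_iff₀ (by positivity)]
      have hcc : c * (1 + 2 / c) = c + 2 := by field_simp
      rw [hcc]
      linarith
    obtain ⟨x, hx⟩ := hx
    exact absurd (ciInf_le hbdd x) (not_le.mpr hx)
  · exact le_ciInf fun x => (sig_pos x).le

lemma endpoint_min {a t : ℝ} (ha : 1/2 ≤ a) (ha1 : a < 1) (h1 : 1 - a ≤ t) (h2 : t ≤ a) :
    a * (1 - a)^2 ≤ t * (1 - t)^2 := by
  nlinarith [sq_nonneg (t + a - 1), mul_nonneg (sub_nonneg.mpr h1) (sub_nonneg.mpr h2),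
    sq_nonneg (t - a), mul_nonneg (mul_nonneg (sub_nonneg.mpr h1) (sub_nonneg.mpr h2)) (sub_nonneg.mpr h2)]

/-- **Smoothness and PL property of the sigmoid (proof of Lemma 3).**
`ψ'(x) = ψ(x)(1 - ψ(x))`, `ψ''(x) = ψ(x)(1 - ψ(x))(1 - 2ψ(x)) ≤ 1` (so `ψ` is `1`-smooth);
`inf ψ = 0`; and for every `ub > 0` and `x ∈ [-ub, ub]`,
`ψ'(x)² ≥ ψ(ub)(1 - ψ(ub))² ψ(x)`, i.e. the sigmoid satisfies the PL condition on `[-ub, ub]`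
with constant `ψ(ub)(1 - ψ(ub))²/2`. -/
theorem stmt_7 :
    (∀ x : ℝ, deriv sigmoid x = sigmoid x * (1 - sigmoid x)) ∧
    (∀ x : ℝ, deriv (deriv sigmoid) x =
      sigmoid x * (1 - sigmoid x) * (1 - 2 * sigmoid x)) ∧
    (∀ x : ℝ, deriv (deriv sigmoid) x ≤ 1) ∧
    (⨅ x : ℝ, sigmoid x) = 0 ∧
    ∀ ub : ℝ, 0 < ub → ∀ x ∈ Set.Icc (-ub) ub,
      sigmoid ub * (1 - sigmoid ub) ^ 2 * sigmoid x ≤ (deriv sigmoid x) ^ 2 ∧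
      2 * (sigmoid ub * (1 - sigmoid ub) ^ 2 / 2) * (sigmoid x - ⨅ y : ℝ, sigmoid y) ≤
        (deriv sigmoid x) ^ 2 := by
  refine ⟨sig_deriv, sig_deriv2, ?_, sig_inf, ?_⟩
  · intro x
    rw [sig_deriv2]
    nlinarith [sig_pos x, sig_lt_one x, sq_nonneg (1 - 2 * sigmoid x)]
  · intro ub hub x hx
    have key : sigmoid ub * (1 - sigmoid ub) ^ 2 * sigmoid x ≤ (deriv sigmoid x) ^ 2 := by
      rw [sig_deriv]
      have h1 : 1 - sigmoid ub ≤ sigmoid x := by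
        rw [← sig_neg]; exact sig_mono hx.1
      have h2 : sigmoid x ≤ sigmoid ub := sig_mono hx.2
      have ha : 1/2 ≤ sigmoid ub := by
        have : sigmoid 0 ≤ sigmoid ub := sig_mono hub.le
        have h0 : sigmoid 0 = 1/2 := by
          unfold sigmoid; norm_num
        linarith
      have := endpoint_min ha (sig_lt_one ub) h1 h2
      have hpos := sig_pos x
      calc sigmoid ub * (1 - sigmoid ub) ^ 2 * sigmoid x
          ≤ sigmoid x * (1 - sigmoid x)^2 * sigmoid x := by nlinarith
        _ = (sigmoid x * (1 - sigmoid x))^2 := by ring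
    refine ⟨key, ?_⟩
    rw [sig_inf]
    calc 2 * (sigmoid ub * (1 - sigmoid ub) ^ 2 / 2) * (sigmoid x - 0)
        = sigmoid ub * (1 - sigmoid ub) ^ 2 * sigmoid x := by ring
      _ ≤ _ := key
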